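/- If X is a simply connected topological space, then the start/endpoint map (s,e): Π(X) → X × X from the topological fundamental groupoid is a homeomorphism. -/

import Mathlib

open unitInterval

/-- Homotopy rel endpoints between two continuous paths `[0,1] → X`. -/
def PathHomotopicRel {X : Type*} [TopologicalSpace X] (c c' : C(I, X)) : Prop :=
  c 0 = c' 0 ∧ c 1 = c' 1 ∧
    ∃ H : C(I × I, X),
      (∀ t, H (0, t) = c t) ∧ (∀ t, H (1, t) = c' t) ∧
      (∀ s, H (s, 0) = c 0) ∧ (∀ s, H (s, 1) = c 1)

/-- The topological fundamental groupoid: homotopy classes rel endpoints of paths,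
with the quotient of the compact-open topology. -/
abbrev FundGroupoidSpace (X : Type*) [TopologicalSpace X] : Type _ :=
  Quot (PathHomotopicRel (X := X))

/-- The start/endpoint map `(s,e) : Π(X) → X × X`. -/
def startEndMap {X : Type*} [TopologicalSpace X] : FundGroupoidSpace X → X × X :=
  Quot.lift (fun c => (c 0, c 1)) fun _ _ h => Prod.ext h.1 h.2.1

/-- `X` is semilocally simply connected: every point has a neighborhood all of whose
loops are null-homotopic in `X`. -/
def SemilocSimplyConnected (X : Type*) [TopologicalSpace X] : Prop :=
  ∀ x : X, ∃ U ∈ nhds x, ∀ c : C(I, X), (∀ t, c t ∈ U) → c 1 = c 0 →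
    PathHomotopicRel c (ContinuousMap.const I (c 0))


open Set Filter Topology


lemma endMap_isOpenMap {X : Type*} [TopologicalSpace X] [LocallyPathConnectedSpace X] :
    IsOpenMap (fun c : C(I, X) => (c 0, c 1)) := by
  refine (TopologicalSpace.isTopologicalBasis_of_subbasis
    ContinuousMap.compactOpen_eq).isOpenMap_iff.2 ?_
  rintro _ ⟨F, ⟨hFfin, hFsub⟩, rfl⟩
  rw [isOpen_iff_forall_mem_open]
  rintro p hp
  obtain ⟨c, hc, rfl⟩ := hp
  -- extract compact/open data
  have hKU : ∀ S ∈ F, ∃ KU : Set I × Set X, IsCompact KU.1 ∧ IsOpen KU.2 ∧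
      S = {f : C(I, X) | MapsTo f KU.1 KU.2} := by
    intro S hS
    rcases hFsub hS with ⟨K, hK, U, hU, rfl⟩
    exact ⟨(K, U), hK, hU, rfl⟩
  choose! KU hK hU hSeq using hKU
  set K : Set C(I, X) → Set I := fun S => (KU S).1 with hKdef
  set U : Set C(I, X) → Set X := fun S => (KU S).2 with hUdef
  have hcS : ∀ S ∈ F, MapsTo c (K S) (U S) := by
    intro S hSF
    have := hc S hSF
    rwa [hSeq S hSF] at this
  set A : Set X := ⋂ S ∈ {S | S ∈ F ∧ (0 : I) ∈ K S}, U S with hAdef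
  set B : Set X := ⋂ S ∈ {S | S ∈ F ∧ (1 : I) ∈ K S}, U S with hBdef
  have hAopen : IsOpen A := (hFfin.subset (fun S hS => hS.1)).isOpen_biInter
    (fun S hS => hU S hS.1)
  have hBopen : IsOpen B := (hFfin.subset (fun S hS => hS.1)).isOpen_biInter
    (fun S hS => hU S hS.1)
  have hc0A : c 0 ∈ A := mem_iInter₂.2 fun S hS => hcS S hS.1 hS.2
  have hc1B : c 1 ∈ B := mem_iInter₂.2 fun S hS => hcS S hS.1 hS.2
  set N₀ : Set I := c ⁻¹' A ∩ ⋂ S ∈ {S | S ∈ F ∧ (0 : I) ∉ K S}, (K S)ᶜ with hN₀def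
  set N₁ : Set I := c ⁻¹' B ∩ ⋂ S ∈ {S | S ∈ F ∧ (1 : I) ∉ K S}, (K S)ᶜ with hN₁def
  have hN₀open : IsOpen N₀ :=
    (hAopen.preimage c.continuous).inter <|
      (hFfin.subset (fun S hS => hS.1)).isOpen_biInter
        (fun S hS => (hK S hS.1).isClosed.isOpen_compl)
  have hN₁open : IsOpen N₁ :=
    (hBopen.preimage c.continuous).inter <|
      (hFfin.subset (fun S hS => hS.1)).isOpen_biInter
        (fun S hS => (hK S hS.1).isClosed.isOpen_compl)
  have h0N₀ : (0 : I) ∈ N₀ := ⟨hc0A, mem_iInter₂.2 fun S hS => hS.2⟩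
  have h1N₁ : (1 : I) ∈ N₁ := ⟨hc1B, mem_iInter₂.2 fun S hS => hS.2⟩
  obtain ⟨ε₀, hε₀, hball₀⟩ := Metric.isOpen_iff.1 hN₀open 0 h0N₀
  obtain ⟨ε₁, hε₁, hball₁⟩ := Metric.isOpen_iff.1 hN₁open 1 h1N₁
  set δ₀ : ℝ := min (ε₀ / 2) 4⁻¹ with hδ₀def
  set δ₁ : ℝ := min (ε₁ / 2) 4⁻¹ with hδ₁def
  have hδ₀pos : 0 < δ₀ := lt_min (by linarith) (by norm_num)
  have hδ₁pos : 0 < δ₁ := lt_min (by linarith) (by norm_num)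
  have hδ₀le : δ₀ ≤ 4⁻¹ := min_le_right _ _
  have hδ₁le : δ₁ ≤ 4⁻¹ := min_le_right _ _
  have hδ₀mem : ∀ t : I, (t : ℝ) ≤ δ₀ → t ∈ N₀ := by
    intro t ht
    apply hball₀
    rw [Metric.mem_ball, Subtype.dist_eq, Real.dist_eq]
    have h1 : |(t : ℝ) - ((0 : I) : ℝ)| = (t : ℝ) := by
      rw [Icc.coe_zero, sub_zero, abs_of_nonneg t.2.1]
    rw [h1]
    have := min_le_left (ε₀ / 2) (4 : ℝ)⁻¹
    linarith
  have hδ₁mem : ∀ t : I, 1 - δ₁ ≤ (t : ℝ) → t ∈ N₁ := by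
    intro t ht
    apply hball₁
    rw [Metric.mem_ball, Subtype.dist_eq, Real.dist_eq]
    have h1 : |(t : ℝ) - ((1 : I) : ℝ)| = 1 - (t : ℝ) := by
      rw [Icc.coe_one, abs_of_nonpos (by linarith [t.2.2])]
      ring
    rw [h1]
    have := min_le_left (ε₁ / 2) (4 : ℝ)⁻¹
    linarith
  have hprojle : ∀ z : ℝ, z ≤ δ₀ → ((projIcc 0 1 zero_le_one z : I) : ℝ) ≤ δ₀ := by
    intro z hz
    show max 0 (min 1 z) ≤ δ₀
    exact max_le hδ₀pos.le ((min_le_right _ _).trans hz)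
  have hprojge : ∀ z : ℝ, 1 - δ₁ ≤ z → 1 - δ₁ ≤ ((projIcc 0 1 zero_le_one z : I) : ℝ) := by
    intro z hz
    show 1 - δ₁ ≤ max 0 (min 1 z)
    exact le_trans (le_min (by linarith) hz) (le_max_right _ _)
  -- the short sub-paths of c near its endpoints
  have q₀ : JoinedIn A (c 0) (c (projIcc 0 1 zero_le_one δ₀)) := by
    refine ⟨⟨⟨fun s => c (projIcc 0 1 zero_le_one (δ₀ * (s : ℝ))),
        c.continuous.comp (continuous_projIcc.comp
          (continuous_const.mul continuous_subtype_val))⟩, ?_, ?_⟩, ?_⟩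
    · show c (projIcc 0 1 zero_le_one (δ₀ * ((0 : I) : ℝ))) = c 0
      norm_num
    · show c (projIcc 0 1 zero_le_one (δ₀ * ((1 : I) : ℝ))) = _
      norm_num
    · intro t
      refine (hδ₀mem _ (hprojle _ ?_)).1
      exact mul_le_of_le_one_right hδ₀pos.le t.2.2
  have q₁ : JoinedIn B (c (projIcc 0 1 zero_le_one (1 - δ₁))) (c 1) := by
    refine ⟨⟨⟨fun s => c (projIcc 0 1 zero_le_one ((1 - δ₁) + δ₁ * (s : ℝ))),
        c.continuous.comp (continuous_projIcc.comp
          (continuous_const.add (continuous_const.mul continuous_subtype_val)))⟩,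
        ?_, ?_⟩, ?_⟩
    · show c (projIcc 0 1 zero_le_one ((1 - δ₁) + δ₁ * ((0 : I) : ℝ))) = _
      norm_num
    · show c (projIcc 0 1 zero_le_one ((1 - δ₁) + δ₁ * ((1 : I) : ℝ))) = c 1
      have : (1 - δ₁) + δ₁ * ((1 : I) : ℝ) = 1 := by norm_num
      rw [this, projIcc_right]
      norm_num
    · intro t
      refine (hδ₁mem _ (hprojge _ ?_)).1
      have : 0 ≤ δ₁ * (t : ℝ) := mul_nonneg hδ₁pos.le t.2.1
      linarith
  refine ⟨pathComponentIn A (c 0) ×ˢ pathComponentIn B (c 1), ?_, ?_, ?_⟩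
  · -- subset of image
    rintro ⟨x, y⟩ ⟨hx, hy⟩
    obtain ha := (JoinedIn.symm hx).trans q₀
    obtain hb := q₁.trans hy
    set ap : Path x (c (projIcc 0 1 zero_le_one δ₀)) := ha.somePath with hapdef
    set bp : Path (c (projIcc 0 1 zero_le_one (1 - δ₁))) y := hb.somePath with hbpdef
    have hapA : ∀ t, ap t ∈ A := ha.somePath_mem
    have hbpB : ∀ t, bp t ∈ B := hb.somePath_mem
    set g : ℝ → X := fun t =>
      if t ≤ δ₀ then ap (projIcc 0 1 zero_le_one (t / δ₀))
      else if t ≤ 1 - δ₁ then c (projIcc 0 1 zero_le_one t)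
      else bp (projIcc 0 1 zero_le_one ((t - (1 - δ₁)) / δ₁)) with hgdef
    have hinner : Continuous fun t : ℝ =>
        if t ≤ 1 - δ₁ then c (projIcc 0 1 zero_le_one t)
        else bp (projIcc 0 1 zero_le_one ((t - (1 - δ₁)) / δ₁)) := by
      refine Continuous.if_le (c.continuous.comp continuous_projIcc)
        (bp.continuous.comp (continuous_projIcc.comp
          ((continuous_id.sub continuous_const).div_const _))) continuous_id continuous_const ?_
      intro t ht
      subst ht
      have h1 : ((1 - δ₁ : ℝ) - (1 - δ₁)) / δ₁ = 0 := by field_simp; ring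
      rw [h1, projIcc_left]
      have := bp.source
      simp only [hbpdef] at this ⊢
      rw [show ((⟨0, by norm_num⟩ : I)) = (0 : I) from rfl, this]
    have hgcont : Continuous g := by
      refine Continuous.if_le (ap.continuous.comp (continuous_projIcc.comp
        (continuous_id.div_const _))) hinner continuous_id continuous_const ?_
      intro t ht
      subst ht
      have h1 : (δ₀ : ℝ) / δ₀ = 1 := by field_simp
      rw [h1, projIcc_right]
      have h2 : (⟨1, by norm_num⟩ : I) = (1 : I) := rfl
      rw [h2, ap.target]
      have h3 : (δ₀ : ℝ) ≤ 1 - δ₁ := by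
        have h4 : (4 : ℝ)⁻¹ ≤ 1 - 4⁻¹ := by norm_num
        calc (δ₀:ℝ) ≤ 4⁻¹ := hδ₀le
        _ ≤ 1 - δ₁ := by linarith
      rw [if_pos h3]
    set f : C(I, X) := ⟨fun t => g t, hgcont.comp continuous_subtype_val⟩ with hfdef
    refine ⟨f, ?_, ?_⟩
    · -- f ∈ ⋂₀ F
      intro S hSF
      rw [hSeq S hSF]
      intro t htK
      show g t ∈ U S
      rcases le_or_gt (t : ℝ) δ₀ with h|h
      · have htN₀ : t ∈ N₀ := hδ₀mem t h
        have h0K : (0 : I) ∈ K S := by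
          by_contra h0
          exact absurd htK (mem_iInter₂.1 htN₀.2 S ⟨hSF, h0⟩)
        have hAU : A ⊆ U S := biInter_subset_of_mem (Set.mem_setOf.2 ⟨hSF, h0K⟩)
        rw [hgdef]
        simp only [if_pos h]
        exact hAU (hapA _)
      · rcases le_or_gt (t : ℝ) (1 - δ₁) with h'|h'
        · rw [hgdef]
          simp only [if_neg (not_le.2 h), if_pos h']
          rw [projIcc_val]
          exact hcS S hSF htK
        · have htN₁ : t ∈ N₁ := hδ₁mem t h'.le
          have h1K : (1 : I) ∈ K S := by
            by_contra h1
            exact absurd htK (mem_iInter₂.1 htN₁.2 S ⟨hSF, h1⟩)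
          have hBU : B ⊆ U S := biInter_subset_of_mem (Set.mem_setOf.2 ⟨hSF, h1K⟩)
          rw [hgdef]
          simp only [if_neg (not_le.2 h), if_neg (not_le.2 h')]
          exact hBU (hbpB _)
    · -- endpoints
      show ((g ((0:I):ℝ), g ((1:I):ℝ)) : X × X) = (x, y)
      have h0 : g ((0:I):ℝ) = x := by
        rw [hgdef]
        simp only [Icc.coe_zero, if_pos hδ₀pos.le]
        rw [zero_div, projIcc_left]
        exact ap.source
      have h1 : g ((1:I):ℝ) = y := by
        rw [hgdef]
        have hn1 : ¬ ((1:ℝ) ≤ δ₀) := by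
          push_neg
          calc δ₀ ≤ 4⁻¹ := hδ₀le
          _ < 1 := by norm_num
        have hn2 : ¬ ((1:ℝ) ≤ 1 - δ₁) := by push_neg; linarith
        simp only [Icc.coe_one, if_neg hn1, if_neg hn2]
        have : ((1:ℝ) - (1 - δ₁)) / δ₁ = 1 := by field_simp; ring
        rw [this, projIcc_right]
        exact bp.target
      rw [h0, h1]
  · exact (hAopen.pathComponentIn _).prod (hBopen.pathComponentIn _)
  · exact ⟨mem_pathComponentIn_self hc0A, mem_pathComponentIn_self hc1B⟩

theorem stmt3 {X : Type*} [TopologicalSpace X] [PathConnectedSpace X]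
    [LocallyPathConnectedSpace X] [SimplyConnectedSpace X] :
    IsHomeomorph (startEndMap (X := X)) := by
  refine ⟨?_, ?_, ?_, ?_⟩
  · exact continuous_quot_lift _ <|
      (continuous_eval_const 0).prodMk (continuous_eval_const 1)
  · intro W hW
    have himg : startEndMap (X := X) '' W
        = (fun c : C(I, X) => (c 0, c 1)) '' (Quot.mk _ ⁻¹' W) := by
      ext p
      constructor
      · rintro ⟨u, huW, rfl⟩
        obtain ⟨c, rfl⟩ := Quot.exists_rep u
        exact ⟨c, huW, rfl⟩
      · rintro ⟨c, hcW, rfl⟩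
        exact ⟨Quot.mk _ c, hcW, rfl⟩
    rw [himg]
    exact endMap_isOpenMap _ (hW.preimage continuous_quot_mk)
  · intro u v h
    obtain ⟨c, rfl⟩ := Quot.exists_rep u
    obtain ⟨c', rfl⟩ := Quot.exists_rep v
    have h' : ((c 0 : X), (c 1 : X)) = (c' 0, c' 1) := h
    have h0 : c 0 = c' 0 := congrArg Prod.fst h'
    have h1 : c 1 = c' 1 := congrArg Prod.snd h'
    apply Quot.sound
    set p : Path (c 0) (c 1) := ⟨c, rfl, rfl⟩ with hp
    set p' : Path (c 0) (c 1) := ⟨c', h0.symm, h1.symm⟩ with hp'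
    obtain ⟨H⟩ := SimplyConnectedSpace.paths_homotopic p p'
    exact ⟨h0, h1, H.toContinuousMap,
      fun t => H.apply_zero t, fun t => H.apply_one t,
      fun s => H.source s, fun s => H.target s⟩
  · rintro ⟨x, y⟩
    exact ⟨Quot.mk _ (PathConnectedSpace.somePath x y).toContinuousMap,
      Prod.ext (PathConnectedSpace.somePath x y).source
        (PathConnectedSpace.somePath x y).target⟩
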